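/- Let H be a complex Hilbert space, P a bounded operator on H, and (χ_ℓ)_{ℓ∈L} a finite family of bounded self-adjoint operators with ∑_{ℓ∈L} χ_ℓ² = 1 (identity operator). Then for every u ∈ H: ‖Pu‖² − ∑_{ℓ∈L} ‖P χ_ℓ u‖² = − ∑_{ℓ∈L} ‖[χ_ℓ, P]u‖² + ∑_{ℓ∈L} Re⟨Pu, [χ_ℓ, [χ_ℓ, P]] u⟩. -/

import Mathlib

/-- Exact localization of squared norms with a partition of unity of self-adjoint
operators `∑ χ_ℓ² = 1` on a complex Hilbert space: for every bounded `P` and `u`,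
`‖Pu‖² - ∑ ‖P(χ_ℓ u)‖² = -∑ ‖[χ_ℓ,P]u‖² + ∑ Re⟨Pu, [χ_ℓ,[χ_ℓ,P]]u⟩`. -/
theorem partition_of_unity_norm_localization
    {H : Type*} [NormedAddCommGroup H] [InnerProductSpace ℂ H] [CompleteSpace H]
    {L : Type*} (s : Finset L) (χ : L → H →L[ℂ] H)
    (hsa : ∀ ℓ ∈ s, IsSelfAdjoint (χ ℓ))
    (hsum : ∑ ℓ ∈ s, χ ℓ ∘L χ ℓ = 1)
    (P : H →L[ℂ] H) (u : H) :
    ‖P u‖ ^ 2 - ∑ ℓ ∈ s, ‖P (χ ℓ u)‖ ^ 2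
      = -∑ ℓ ∈ s, ‖(χ ℓ ∘L P - P ∘L χ ℓ) u‖ ^ 2
        + ∑ ℓ ∈ s, (inner ℂ (P u)
            ((χ ℓ ∘L (χ ℓ ∘L P - P ∘L χ ℓ) - (χ ℓ ∘L P - P ∘L χ ℓ) ∘L χ ℓ) u) : ℂ).re := by
  have key : ∀ ℓ ∈ s, ‖χ ℓ (P u)‖ ^ 2 - ‖P (χ ℓ u)‖ ^ 2
      = -‖(χ ℓ ∘L P - P ∘L χ ℓ) u‖ ^ 2
        + (inner ℂ (P u)
            ((χ ℓ ∘L (χ ℓ ∘L P - P ∘L χ ℓ) - (χ ℓ ∘L P - P ∘L χ ℓ) ∘L χ ℓ) u) : ℂ).re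
        + (inner ℂ (P u) (((χ ℓ ∘L χ ℓ) ∘L P - P ∘L (χ ℓ ∘L χ ℓ)) u) : ℂ).re := by
    intro ℓ hℓ
    have hsym := (hsa ℓ hℓ).isSymmetric
    set a := P u with ha
    set c := (χ ℓ ∘L P - P ∘L χ ℓ) u with hc
    have hb : P (χ ℓ u) = χ ℓ a - c := by
      simp [hc, ha, ContinuousLinearMap.sub_apply, ContinuousLinearMap.comp_apply]
    have h1 : ‖P (χ ℓ u)‖ ^ 2 = ‖χ ℓ a‖ ^ 2 - 2 * (inner ℂ (χ ℓ a) c : ℂ).re + ‖c‖ ^ 2 := by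
      rw [hb, @norm_sub_sq ℂ]; rfl
    have h2 : (inner ℂ (χ ℓ a) c : ℂ) = inner ℂ a (χ ℓ c) := hsym a c
    have h3 : (inner ℂ a (χ ℓ c) : ℂ) + inner ℂ a (χ ℓ c)
        = inner ℂ (P u) ((χ ℓ ∘L (χ ℓ ∘L P - P ∘L χ ℓ) - (χ ℓ ∘L P - P ∘L χ ℓ) ∘L χ ℓ) u)
          + inner ℂ (P u) (((χ ℓ ∘L χ ℓ) ∘L P - P ∘L (χ ℓ ∘L χ ℓ)) u) := by
      rw [← inner_add_right, ← inner_add_right]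
      congr 1
      simp only [hc, ha, ContinuousLinearMap.sub_apply, ContinuousLinearMap.comp_apply, map_sub]
      abel
    have h4 := congrArg Complex.re h3
    simp only [Complex.add_re] at h4
    rw [h1, h2] at *
    linarith [h4]
  have hsumnorm : ∑ ℓ ∈ s, ‖χ ℓ (P u)‖ ^ 2 = ‖P u‖ ^ 2 := by
    have h : ∀ ℓ ∈ s, ‖χ ℓ (P u)‖ ^ 2 = (inner ℂ (P u) ((χ ℓ ∘L χ ℓ) (P u)) : ℂ).re := by
      intro ℓ hℓ
      have hsym := (hsa ℓ hℓ).isSymmetric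
      have h0 : (inner ℂ (χ ℓ (P u)) (χ ℓ (P u)) : ℂ) = inner ℂ (P u) (χ ℓ (χ ℓ (P u))) :=
        hsym (P u) (χ ℓ (P u))
      rw [ContinuousLinearMap.comp_apply, ← h0]
      exact (@inner_self_eq_norm_sq ℂ H _ _ _ _).symm
    rw [Finset.sum_congr rfl h, ← Complex.re_sum, ← inner_sum]
    have h1 : ∑ ℓ ∈ s, (χ ℓ ∘L χ ℓ) (P u) = P u := by
      rw [← ContinuousLinearMap.sum_apply, hsum, ContinuousLinearMap.one_apply]
    rw [h1]
    exact @inner_self_eq_norm_sq ℂ H _ _ _ (P u)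
  have hzero : ∑ ℓ ∈ s, (inner ℂ (P u)
      (((χ ℓ ∘L χ ℓ) ∘L P - P ∘L (χ ℓ ∘L χ ℓ)) u) : ℂ).re = 0 := by
    rw [← Complex.re_sum, ← inner_sum]
    have h1 : ∑ ℓ ∈ s, ((χ ℓ ∘L χ ℓ) ∘L P - P ∘L (χ ℓ ∘L χ ℓ)) u = 0 := by
      rw [← ContinuousLinearMap.sum_apply]
      have : ∑ ℓ ∈ s, ((χ ℓ ∘L χ ℓ) ∘L P - P ∘L (χ ℓ ∘L χ ℓ))
          = (∑ ℓ ∈ s, χ ℓ ∘L χ ℓ) * P - P * (∑ ℓ ∈ s, χ ℓ ∘L χ ℓ) := by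
        rw [Finset.sum_sub_distrib, Finset.sum_mul, Finset.mul_sum]
        rfl
      rw [this, hsum]
      simp
    rw [h1, inner_zero_right]
    simp
  have hsplit : ∑ ℓ ∈ s, (‖χ ℓ (P u)‖ ^ 2 - ‖P (χ ℓ u)‖ ^ 2)
      = -∑ ℓ ∈ s, ‖(χ ℓ ∘L P - P ∘L χ ℓ) u‖ ^ 2
        + ∑ ℓ ∈ s, (inner ℂ (P u)
            ((χ ℓ ∘L (χ ℓ ∘L P - P ∘L χ ℓ) - (χ ℓ ∘L P - P ∘L χ ℓ) ∘L χ ℓ) u) : ℂ).re := by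
    rw [Finset.sum_congr rfl key, Finset.sum_add_distrib, Finset.sum_add_distrib, hzero,
      ← Finset.sum_neg_distrib]
    ring
  rw [← hsplit, Finset.sum_sub_distrib, hsumnorm]
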